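/- Let X, Y, δ be random variables with δ taking values in {0,1}, such that P(δ = 1 | X, Y) = P(δ = 1 | X) (missing at random). Suppose further Y = r(X) + σ₀e where e is independent of X. Then e and δ are conditionally independent given X, and the conditional law of (X, Y) given δ = 1 factors as Q₁ = G₁ ⊗ F, where G₁ is the conditional law of X given δ = 1 and F is the (unconditional) law of σ₀e. -/

import Mathlib

open MeasureTheory ProbabilityTheory

/-- MAR model: if `P(δ = 1 | X, Y) = P(δ = 1 | X)` (missing at random) and
`Y = r(X) + σ₀e` with `e ⟂ X`, then `e` and `δ` are conditionally independent given `X`,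
and the conditional law of `(X, Y − r(X)) = (X, σ₀e)` given `δ = 1` factors as
`Q₁ = G₁ ⊗ F`, where `G₁` is the law of `X` given `δ = 1` and `F` the unconditional law
of `σ₀e`. -/
theorem stmt12 {Ω : Type*} [m0 : MeasurableSpace Ω] [StandardBorelSpace Ω]
    (μ : Measure Ω) [IsProbabilityMeasure μ]
    (X Y e : Ω → ℝ) (δ : Ω → ℝ)
    (hX : Measurable X) (hY : Measurable Y) (he : Measurable e) (hδ : Measurable δ)
    (hδ01 : ∀ x, δ x = 0 ∨ δ x = 1)
    (hpos : μ {x | δ x = 1} ≠ 0)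
    (hMAR : μ[δ | MeasurableSpace.comap (fun x => (X x, Y x)) inferInstance]
            =ᵐ[μ] μ[δ | MeasurableSpace.comap X inferInstance])
    (r : ℝ → ℝ) (hr : Measurable r) (σ₀ : ℝ) (hσ₀ : 0 < σ₀)
    (hmodel : ∀ x, Y x = r (X x) + σ₀ * e x)
    (hXe : IndepFun X e μ) :
    CondIndepFun (MeasurableSpace.comap X inferInstance) hX.comap_le e δ μ
    ∧ Measure.map (fun x => (X x, Y x - r (X x))) (μ[|{x | δ x = 1}])
        = (Measure.map X (μ[|{x | δ x = 1}])).prod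
            (Measure.map (fun x => σ₀ * e x) μ) := by
  classical
  have hmX : MeasurableSpace.comap X inferInstance ≤ m0 := hX.comap_le
  have hXY : Measurable fun x => (X x, Y x) := hX.prodMk hY
  have hmXY : MeasurableSpace.comap (fun x => (X x, Y x)) inferInstance ≤ m0 := hXY.comap_le
  set D := {x | δ x = 1} with hDd
  have hD : MeasurableSet D := hδ (measurableSet_singleton 1)
  have hδi : δ = D.indicator fun _ => (1:ℝ) := by
    funext x
    rcases hδ01 x with h | h <;> simp [Set.indicator_apply, hDd, h]
  have hδint : Integrable δ μ := by
    rw [hδi]; exact (integrable_const (1:ℝ)).indicator hD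
  have hind_int : ∀ {T : Set Ω}, MeasurableSet T →
      Integrable (T.indicator fun _ => (1:ℝ)) μ :=
    fun hT => (integrable_const (1:ℝ)).indicator hT
  have hemXY : ∀ {s : Set ℝ}, MeasurableSet s → MeasurableSet[(MeasurableSpace.comap (fun x => (X x, Y x)) inferInstance)] (e ⁻¹' s) := by
    intro s hs
    have hψ : Measurable fun p : ℝ × ℝ => (p.2 - r p.1) / σ₀ :=
      (measurable_snd.sub (hr.comp measurable_fst)).div_const σ₀
    refine ⟨(fun p : ℝ × ℝ => (p.2 - r p.1) / σ₀) ⁻¹' s, hψ hs, ?_⟩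
    ext x
    have hx : (Y x - r (X x)) / σ₀ = e x := by
      rw [hmodel x]; field_simp; ring
    simp [Set.mem_preimage, hx]
  have hXmXY : ∀ {A : Set ℝ}, MeasurableSet A → MeasurableSet[(MeasurableSpace.comap (fun x => (X x, Y x)) inferInstance)] (X ⁻¹' A) := by
    intro A hA
    exact ⟨A ×ˢ Set.univ, hA.prod MeasurableSet.univ, by ext x; simp⟩
  have hXmX : ∀ {A : Set ℝ}, MeasurableSet A → MeasurableSet[(MeasurableSpace.comap X inferInstance)] (X ⁻¹' A) :=
    fun {A} hA => ⟨A, hA, rfl⟩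
  -- the master identity
  have key : ∀ A s : Set ℝ, MeasurableSet A → MeasurableSet s →
      μ (X ⁻¹' A ∩ e ⁻¹' s ∩ D) = μ (X ⁻¹' A ∩ D) * μ (e ⁻¹' s) := by
    intro A s hA hs
    set S := X ⁻¹' A ∩ e ⁻¹' s with hSd
    have hSm0 : MeasurableSet S := (hX hA).inter (he hs)
    have hSXY : MeasurableSet[(MeasurableSpace.comap (fun x => (X x, Y x)) inferInstance)] S := (hXmXY hA).inter (hemXY hs)
    set f := S.indicator fun _ => (1:ℝ) with hfd
    have hfδ : f * δ = (S ∩ D).indicator fun _ => (1:ℝ) := by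
      funext x
      by_cases h1 : x ∈ S <;> by_cases h2 : x ∈ D <;>
        simp [hfd, hδi, Set.indicator_apply, Set.mem_inter_iff, h1, h2]
    have hfδint : Integrable (f * δ) μ := by
      rw [hfδ]; exact hind_int (hSm0.inter hD)
    have hfm : StronglyMeasurable[(MeasurableSpace.comap (fun x => (X x, Y x)) inferInstance)] f :=
      (stronglyMeasurable_const :
        StronglyMeasurable[(MeasurableSpace.comap (fun x => (X x, Y x)) inferInstance)] fun _ : Ω => (1:ℝ)).indicator hSXY
    have step2 : ∫ x, (f * δ) x ∂μ = ∫ x, f x * (μ[δ|(MeasurableSpace.comap X inferInstance)]) x ∂μ := by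
      have h1 : μ[f * δ|(MeasurableSpace.comap (fun x => (X x, Y x)) inferInstance)] =ᵐ[μ] f * μ[δ|(MeasurableSpace.comap (fun x => (X x, Y x)) inferInstance)] :=
        condExp_mul_of_stronglyMeasurable_left hfm hfδint hδint
      calc ∫ x, (f * δ) x ∂μ = ∫ x, (μ[f * δ|(MeasurableSpace.comap (fun x => (X x, Y x)) inferInstance)]) x ∂μ := (integral_condExp hmXY).symm
        _ = ∫ x, f x * (μ[δ|(MeasurableSpace.comap (fun x => (X x, Y x)) inferInstance)]) x ∂μ :=
            integral_congr_ae (h1.mono fun x hx => by simpa using hx)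
        _ = ∫ x, f x * (μ[δ|(MeasurableSpace.comap X inferInstance)]) x ∂μ :=
            integral_congr_ae (hMAR.mono fun x hx => by simp only [hx])
    set h₁ := (X ⁻¹' A).indicator (fun _ => (1:ℝ)) * μ[δ|(MeasurableSpace.comap X inferInstance)] with h₁d
    set h₂ := (e ⁻¹' s).indicator (fun _ => (1:ℝ)) with h₂d
    have step3 : ∀ x, f x * (μ[δ|(MeasurableSpace.comap X inferInstance)]) x = h₁ x * h₂ x := by
      intro x
      by_cases hx1 : x ∈ X ⁻¹' A <;> by_cases hx2 : x ∈ e ⁻¹' s <;>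
        simp [hfd, hSd, h₁d, h₂d, Set.indicator_apply, Set.mem_inter_iff, hx1, hx2]
    have hsm₁ : StronglyMeasurable[(MeasurableSpace.comap X inferInstance)] h₁ :=
      ((stronglyMeasurable_const :
        StronglyMeasurable[(MeasurableSpace.comap X inferInstance)] fun _ : Ω => (1:ℝ)).indicator (hXmX hA)).mul
        stronglyMeasurable_condExp
    have hsm₂ : StronglyMeasurable[MeasurableSpace.comap e inferInstance] h₂ :=
      (stronglyMeasurable_const :
        StronglyMeasurable[MeasurableSpace.comap e inferInstance]
          fun _ : Ω => (1:ℝ)).indicator ⟨s, hs, rfl⟩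
    have hIndep : IndepFun h₁ h₂ μ := by
      have hXe' : Indep (MeasurableSpace.comap X inferInstance) (MeasurableSpace.comap e inferInstance) μ := hXe
      have : Indep (MeasurableSpace.comap h₁ inferInstance)
          (MeasurableSpace.comap h₂ inferInstance) μ :=
        indep_of_indep_of_le_right (indep_of_indep_of_le_left hXe' hsm₁.measurable.comap_le)
          hsm₂.measurable.comap_le
      exact this
    have step5 : ∫ x, h₁ x * h₂ x ∂μ = (∫ x, h₁ x ∂μ) * ∫ x, h₂ x ∂μ :=
      hIndep.integral_fun_mul_eq_mul_integral (hsm₁.mono hmX).aestronglyMeasurable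
        (hsm₂.mono he.comap_le).aestronglyMeasurable
    have step6 : ∫ x, h₂ x ∂μ = (μ (e ⁻¹' s)).toReal := integral_indicator_one (he hs)
    have step7 : ∫ x, h₁ x ∂μ = (μ (X ⁻¹' A ∩ D)).toReal := by
      have e1 : h₁ = (X ⁻¹' A).indicator (μ[δ|(MeasurableSpace.comap X inferInstance)]) := by
        funext x; by_cases hx : x ∈ X ⁻¹' A <;> simp [h₁d, Set.indicator_apply, hx]
      rw [e1, integral_indicator (hX hA), setIntegral_condExp hmX hδint (hXmX hA),
        ← integral_indicator (hX hA), hδi, Set.indicator_indicator]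
      exact integral_indicator_one ((hX hA).inter hD)
    have main : (μ (S ∩ D)).toReal = (μ (X ⁻¹' A ∩ D)).toReal * (μ (e ⁻¹' s)).toReal := by
      have l1 : (μ (S ∩ D)).toReal = ∫ x, (f * δ) x ∂μ := by
        rw [hfδ]; exact (integral_indicator_one (hSm0.inter hD)).symm
      rw [l1, step2]
      simp only [step3]
      rw [step5, step6, step7]
    rw [← ENNReal.toReal_mul] at main
    exact (ENNReal.toReal_eq_toReal_iff' (measure_ne_top μ _)
      (ENNReal.mul_ne_top (measure_ne_top μ _) (measure_ne_top μ _))).mp main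
  -- conditional expectation of `1_{e⁻¹ s}` given `(MeasurableSpace.comap X inferInstance)` is constant
  have hce : ∀ s : Set ℝ, MeasurableSet s →
      μ[(e ⁻¹' s).indicator (fun _ => (1:ℝ))|(MeasurableSpace.comap X inferInstance)] =ᵐ[μ] fun _ => (μ (e ⁻¹' s)).toReal := by
    intro s hs
    have hXe' : Indep (MeasurableSpace.comap e inferInstance) (MeasurableSpace.comap X inferInstance) μ := hXe.symm
    have h := condExp_indep_eq (μ := μ) he.comap_le hmX
      ((stronglyMeasurable_const :
        StronglyMeasurable[MeasurableSpace.comap e inferInstance]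
          fun _ : Ω => (1:ℝ)).indicator ⟨s, hs, rfl⟩) hXe'
    refine h.trans (Filter.EventuallyEq.of_eq ?_)
    funext _
    exact integral_indicator_one (he hs)
  -- main conditional expectation identity
  have hmain : ∀ s : Set ℝ, MeasurableSet s →
      μ[(e ⁻¹' s ∩ D).indicator (fun _ => (1:ℝ))|(MeasurableSpace.comap X inferInstance)]
        =ᵐ[μ] fun ω => (μ (e ⁻¹' s)).toReal * (μ[D.indicator (fun _ => (1:ℝ))|(MeasurableSpace.comap X inferInstance)]) ω := by
    intro s hs
    refine (ae_eq_condExp_of_forall_setIntegral_eq hmX (hind_int ((he hs).inter hD))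
      (fun A hA hμA => (integrable_condExp.const_mul _).integrableOn)
      (fun A hAm hμA => ?_)
      (StronglyMeasurable.aestronglyMeasurable (stronglyMeasurable_const.mul stronglyMeasurable_condExp))).symm
    obtain ⟨A', hA', rfl⟩ := hAm
    have r1 : ∫ x in X ⁻¹' A',
        (fun ω => (μ (e ⁻¹' s)).toReal * (μ[D.indicator (fun _ => (1:ℝ))|(MeasurableSpace.comap X inferInstance)]) ω) x ∂μ
        = (μ (e ⁻¹' s)).toReal * (μ (X ⁻¹' A' ∩ D)).toReal := by
      beta_reduce
      rw [MeasureTheory.integral_const_mul, setIntegral_condExp hmX (hind_int hD) (hXmX hA'),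
        ← integral_indicator (hX hA'), Set.indicator_indicator]
      congr 1
      exact integral_indicator_one ((hX hA').inter hD)
    have r2 : ∫ x in X ⁻¹' A', (e ⁻¹' s ∩ D).indicator (fun _ => (1:ℝ)) x ∂μ
        = (μ (X ⁻¹' A' ∩ (e ⁻¹' s ∩ D))).toReal := by
      rw [← integral_indicator (hX hA'), Set.indicator_indicator]
      exact integral_indicator_one ((hX hA').inter ((he hs).inter hD))
    rw [r1, r2, ← Set.inter_assoc, key A' s hA' hs, ENNReal.toReal_mul]
    ring
  constructor
  · -- conditional independence
    rw [condIndepFun_iff_condExp_inter_preimage_eq_mul he hδ]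
    intro s t hs ht
    by_cases h1 : (1:ℝ) ∈ t <;> by_cases h0 : (0:ℝ) ∈ t
    · -- δ ⁻¹' t = univ
      have ht' : δ ⁻¹' t = Set.univ :=
        Set.eq_univ_of_forall fun x => by
          rcases hδ01 x with h | h <;> simp [Set.mem_preimage, h, h0, h1]
      rw [ht', Set.inter_univ]
      have hu : μ[Set.indicator Set.univ (fun _ : Ω => (1:ℝ))|(MeasurableSpace.comap X inferInstance)] = fun _ => (1:ℝ) := by
        rw [Set.indicator_univ]; exact condExp_const hmX 1
      filter_upwards with ω
      rw [hu]
      simp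
    · -- δ ⁻¹' t = D
      have ht' : δ ⁻¹' t = D := by
        ext x; rcases hδ01 x with h | h <;> simp [hDd, h, h0, h1]
      rw [ht']
      filter_upwards [hmain s hs, hce s hs] with ω hω₁ hω₂
      rw [hω₁, hω₂]
    · -- δ ⁻¹' t = Dᶜ
      have ht' : δ ⁻¹' t = Dᶜ := by
        ext x; rcases hδ01 x with h | h <;> simp [hDd, h, h0, h1]
      rw [ht']
      have e1 : (e ⁻¹' s ∩ Dᶜ).indicator (fun _ : Ω => (1:ℝ))
          = (e ⁻¹' s).indicator (fun _ => (1:ℝ)) - (e ⁻¹' s ∩ D).indicator (fun _ => (1:ℝ)) := by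
        funext x
        by_cases hx1 : x ∈ e ⁻¹' s <;> by_cases hx2 : x ∈ D <;>
          simp [Set.indicator_apply, Set.mem_inter_iff, hx1, hx2]
      have e2 : Dᶜ.indicator (fun _ : Ω => (1:ℝ))
          = (fun _ => (1:ℝ)) - D.indicator (fun _ => (1:ℝ)) := by
        funext x; by_cases hx : x ∈ D <;> simp [Set.indicator_apply, hx]
      have c1 := condExp_sub (μ := μ) (m := (MeasurableSpace.comap X inferInstance)) (hind_int (he hs)) (hind_int ((he hs).inter hD))
      have c2 := condExp_sub (μ := μ) (m := (MeasurableSpace.comap X inferInstance)) (integrable_const (1:ℝ)) (hind_int hD)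
      rw [e1, e2]
      filter_upwards [c1, c2, hmain s hs, hce s hs] with ω h1' h2' h3' h4'
      rw [h1', h2']
      simp only [Pi.sub_apply]
      rw [h3', h4', condExp_const hmX]
      ring
    · -- δ ⁻¹' t = ∅
      have ht' : δ ⁻¹' t = ∅ := by
        ext x; rcases hδ01 x with h | h <;> simp [h, h0, h1]
      rw [ht', Set.inter_empty]
      simp only [Set.indicator_empty, condExp_zero]
      have hz : μ[fun _ : Ω => (0:ℝ)|MeasurableSpace.comap X inferInstance] = 0 :=
        condExp_zero
      rw [hz]
      filter_upwards with ω
      simp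
  · -- factorization of the conditional law
    have hprodfun : (fun x => (X x, Y x - r (X x))) = fun x => (X x, σ₀ * e x) := by
      funext x; rw [hmodel x, add_sub_cancel_left]
    rw [hprodfun]
    have hZ : Measurable fun x => σ₀ * e x := he.const_mul σ₀
    have hs' : ∀ {B : Set ℝ}, MeasurableSet B → MeasurableSet ((fun y => σ₀ * y) ⁻¹' B) :=
      fun {B} hB => (measurable_const_mul σ₀) hB
    have hμD : μ D ≠ ⊤ := measure_ne_top μ D
    have hZc : ∀ {B : Set ℝ}, MeasurableSet B →
        μ[|D] ((fun x => σ₀ * e x) ⁻¹' B) = μ (e ⁻¹' ((fun y => σ₀ * y) ⁻¹' B)) := by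
      intro B hB
      rw [cond_apply hD]
      have hk := key Set.univ ((fun y => σ₀ * y) ⁻¹' B) MeasurableSet.univ (hs' hB)
      simp only [Set.preimage_univ, Set.univ_inter] at hk
      rw [Set.inter_comm D _,
        show (fun x => σ₀ * e x) ⁻¹' B = e ⁻¹' ((fun y => σ₀ * y) ⁻¹' B) from rfl,
        hk, ← mul_assoc, ENNReal.inv_mul_cancel hpos hμD, one_mul]
    haveI : IsProbabilityMeasure (μ[|D]) := cond_isProbabilityMeasure hpos
    have hmapZ : Measure.map (fun x => σ₀ * e x) (μ[|D]) = Measure.map (fun x => σ₀ * e x) μ := by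
      ext B hB
      rw [Measure.map_apply hZ hB, Measure.map_apply hZ hB, hZc hB]
      rfl
    have hind : IndepFun X (fun x => σ₀ * e x) (μ[|D]) := by
      rw [indepFun_iff_measure_inter_preimage_eq_mul]
      intro A B hA hB
      rw [cond_apply hD, cond_apply hD, hZc hB]
      have hk := key A ((fun y => σ₀ * y) ⁻¹' B) hA (hs' hB)
      rw [Set.inter_comm D (X ⁻¹' A ∩ _),
        show (fun x => σ₀ * e x) ⁻¹' B = e ⁻¹' ((fun y => σ₀ * y) ⁻¹' B) from rfl,
        hk, Set.inter_comm D (X ⁻¹' A)]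
      ring
    calc Measure.map (fun x => (X x, σ₀ * e x)) (μ[|D])
        = (Measure.map X (μ[|D])).prod (Measure.map (fun x => σ₀ * e x) (μ[|D])) :=
          (indepFun_iff_map_prod_eq_prod_map_map hX.aemeasurable hZ.aemeasurable).mp hind
      _ = _ := by rw [hmapZ]
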